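/- Let d₁ ≥ 2 be an integer, d₂ ∈ {2, 9}, 0 < t* ≤ 1.5, and let L = L_{d₁d₂}. Suppose F : [0, t*] → ℝ⁵ is continuous and μ : [0, t*] → ℝ⁵ is continuous with μ(0) = 0, differentiable on (0, t*], and satisfies μ'(t) = (1/t)·L·μ(t) + F(t) for all t ∈ (0, t*]. Then sup_{t ∈ [0,t*]} |μ(t)| + sup_{t ∈ (0,t*]} |μ'(t)| ≤ 25 · sup_{t ∈ [0,t*]} |F(t)|. -/

import Mathlib

noncomputable section

/-- The 5×5 matrix `L_{d₁d₂}`: zero except `(L)₂₂ = −d₂`, `(L)₃₂ = 2`, `(L)₃₃ = −2`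
(rows and columns indexed 1,…,5; here indexed `0,…,4`). -/
def Lmat (d₁ d₂ : ℕ) : Matrix (Fin 5) (Fin 5) ℝ :=
  Matrix.of fun i j =>
    if i = 1 ∧ j = 1 then -(d₂ : ℝ)
    else if i = 2 ∧ j = 1 then 2
    else if i = 2 ∧ j = 2 then -2
    else 0

/-- The action of `L_{d₁d₂}` on `ℝ⁵` (with the Euclidean norm). -/
def Lop (d₁ d₂ : ℕ) (x : EuclideanSpace ℝ (Fin 5)) : EuclideanSpace ℝ (Fin 5) :=
  WithLp.toLp 2 ((Lmat d₁ d₂).mulVec x)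

private lemma mono_aux {T C : ℝ} {k : ℕ} (g g' : ℝ → ℝ)
    (hgc : ContinuousOn g (Set.Icc 0 T))
    (hgd : ∀ t ∈ Set.Ioc 0 T, HasDerivWithinAt g (g' t) (Set.Icc 0 T) t)
    (hb : ∀ t ∈ Set.Ioc 0 T, g' t ≤ C * t ^ k) :
    ∀ t ∈ Set.Icc 0 T, g t - g 0 ≤ C / (k + 1) * t ^ (k + 1) := by
  intro t ht
  set φ : ℝ → ℝ := fun s => C / (k + 1) * s ^ (k + 1) - g s with hφ
  have hder : ∀ x ∈ interior (Set.Icc (0:ℝ) T), HasDerivAt φ (C * x ^ k - g' x) x := by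
    intro x hx
    rw [interior_Icc] at hx
    have hgx : HasDerivAt g (g' x) x :=
      (hgd x ⟨hx.1, hx.2.le⟩).hasDerivAt (Icc_mem_nhds hx.1 hx.2)
    have hp : HasDerivAt (fun s : ℝ => C / (k + 1) * s ^ (k + 1))
        (C / (k + 1) * (((k:ℝ) + 1) * x ^ k)) x := by
      have := (hasDerivAt_pow (k + 1) x).const_mul (C / (k + 1))
      simpa using this
    have h := hp.sub hgx
    refine h.congr_deriv ?_
    symm
    have hk : ((k:ℝ) + 1) ≠ 0 := by positivity
    field_simp
  have hmono : MonotoneOn φ (Set.Icc 0 T) := by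
    apply monotoneOn_of_deriv_nonneg (convex_Icc 0 T)
    · exact (Continuous.continuousOn (by continuity)).sub hgc
    · intro x hx
      exact ((hder x hx).differentiableAt).differentiableWithinAt
    · intro x hx
      rw [(hder x hx).deriv]
      have hx' : x ∈ Set.Ioc 0 T := by
        rw [interior_Icc] at hx; exact ⟨hx.1, hx.2.le⟩
      linarith [hb x hx']
  have h0T : (0:ℝ) ∈ Set.Icc (0:ℝ) T := ⟨le_refl _, ht.1.trans ht.2⟩
  have := hmono h0T ht ht.1
  simp only [hφ] at this
  simp only [zero_pow (Nat.succ_ne_zero k), mul_zero, zero_sub] at this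
  linarith

private lemma absA {T C : ℝ} {k : ℕ} (g g' : ℝ → ℝ) (hg0 : g 0 = 0)
    (hgc : ContinuousOn g (Set.Icc 0 T))
    (hgd : ∀ t ∈ Set.Ioc 0 T, HasDerivWithinAt g (g' t) (Set.Icc 0 T) t)
    (hb : ∀ t ∈ Set.Ioc 0 T, |g' t| ≤ C * t ^ k) :
    ∀ t ∈ Set.Icc 0 T, |g t| ≤ C / (k + 1) * t ^ (k + 1) := by
  intro t ht
  have h1 := mono_aux g g' hgc hgd (fun r hr => (abs_le.1 (hb r hr)).2) t ht
  have h2 := mono_aux (fun s => -g s) (fun s => -g' s) hgc.neg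
      (fun r hr => (hgd r hr).neg)
      (fun r hr => by
        have := (abs_le.1 (hb r hr)).1
        show -g' r ≤ C * r ^ k
        linarith) t ht
  simp only [hg0, sub_zero, neg_zero] at h1 h2
  rw [abs_le]
  constructor <;> linarith

private lemma apply_le_norm (x : EuclideanSpace ℝ (Fin 5)) (i : Fin 5) : |x i| ≤ ‖x‖ := by
  rw [EuclideanSpace.norm_eq]
  have h1 : |x i| = Real.sqrt (‖x i‖ ^ 2) := by
    rw [Real.sqrt_sq_eq_abs]; simp
  rw [h1]
  apply Real.sqrt_le_sqrt
  exact Finset.single_le_sum (fun j _ => sq_nonneg ‖x j‖) (Finset.mem_univ i)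

private lemma l2_le_l1 (x : EuclideanSpace ℝ (Fin 5)) :
    ‖x‖ ≤ |x 0| + |x 1| + |x 2| + |x 3| + |x 4| := by
  have hx : x = ∑ i, EuclideanSpace.single i (x i) := by
    ext j
    rw [WithLp.ofLp_sum, Finset.sum_apply]
    simp [EuclideanSpace.single_apply]
  calc ‖x‖ = ‖∑ i, EuclideanSpace.single i (x i)‖ := by rw [← hx]
    _ ≤ ∑ i, ‖EuclideanSpace.single (𝕜 := ℝ) i (x i)‖ := norm_sum_le _ _
    _ = ∑ i : Fin 5, |x i| := by simp [EuclideanSpace.norm_single]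
    _ = |x 0| + |x 1| + |x 2| + |x 3| + |x 4| := by
        rw [Fin.sum_univ_five]

private lemma Lop_zero (d₁ d₂ : ℕ) (x : EuclideanSpace ℝ (Fin 5)) (i : Fin 5)
    (hi : i = 0 ∨ i = 3 ∨ i = 4) : Lop d₁ d₂ x i = 0 := by
  rcases hi with h | h | h <;> subst h <;>
    simp [Lop, Lmat, Matrix.mulVec, dotProduct, Fin.sum_univ_five]

private lemma Lop_one (d₁ d₂ : ℕ) (x : EuclideanSpace ℝ (Fin 5)) :
    Lop d₁ d₂ x 1 = -(d₂ : ℝ) * x 1 := by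
  simp [Lop, Lmat, Matrix.mulVec, dotProduct, Fin.sum_univ_five]

private lemma Lop_two (d₁ d₂ : ℕ) (x : EuclideanSpace ℝ (Fin 5)) :
    Lop d₁ d₂ x 2 = 2 * x 1 - 2 * x 2 := by
  simp [Lop, Lmat, Matrix.mulVec, dotProduct, Fin.sum_univ_five]
  ring

theorem singular_linear_C0_C1_bound
    (d₁ d₂ : ℕ) (hd₁ : 2 ≤ d₁) (hd₂ : d₂ = 2 ∨ d₂ = 9)
    (tstar : ℝ) (h0 : 0 < tstar) (h1 : tstar ≤ 1.5)
    (F μ μ' : ℝ → EuclideanSpace ℝ (Fin 5))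
    (hF : ContinuousOn F (Set.Icc 0 tstar))
    (hμc : ContinuousOn μ (Set.Icc 0 tstar)) (hμ0 : μ 0 = 0)
    (hderiv : ∀ t ∈ Set.Ioc 0 tstar, HasDerivWithinAt μ (μ' t) (Set.Icc 0 tstar) t)
    (hode : ∀ t ∈ Set.Ioc 0 tstar, μ' t = (1/t) • Lop d₁ d₂ (μ t) + F t) :
    ∀ t ∈ Set.Icc (0:ℝ) tstar, ∀ s ∈ Set.Ioc (0:ℝ) tstar,
      ‖μ t‖ + ‖μ' s‖ ≤ 25 * ⨆ r : Set.Icc (0:ℝ) tstar, ‖F r‖ := by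
  obtain ⟨C0, hC0⟩ :=
    (isCompact_Icc : IsCompact (Set.Icc (0:ℝ) tstar)).exists_bound_of_continuousOn hF
  set M : ℝ := ⨆ r : Set.Icc (0:ℝ) tstar, ‖F r‖ with hMdef
  have hbdd : BddAbove (Set.range fun r : Set.Icc (0:ℝ) tstar => ‖F r‖) := by
    refine ⟨C0, ?_⟩
    rintro y ⟨r, rfl⟩
    exact hC0 r r.2
  have hM : ∀ r ∈ Set.Icc (0:ℝ) tstar, ‖F r‖ ≤ M := fun r hr => le_ciSup hbdd ⟨r, hr⟩
  have hM0 : 0 ≤ M := le_trans (norm_nonneg _) (hM 0 ⟨le_refl _, h0.le⟩)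
  have hd₂2 : 2 ≤ d₂ := by rcases hd₂ with h | h <;> omega
  have hd₂9 : d₂ ≤ 9 := by rcases hd₂ with h | h <;> omega
  -- component derivatives and continuity
  have hgd : ∀ (i : Fin 5), ∀ r ∈ Set.Ioc (0:ℝ) tstar,
      HasDerivWithinAt (fun u => μ u i) (μ' r i) (Set.Icc 0 tstar) r := by
    intro i r hr
    exact (EuclideanSpace.proj i).hasFDerivAt.comp_hasDerivWithinAt r (hderiv r hr)
  have hgc : ∀ (i : Fin 5), ContinuousOn (fun u => μ u i) (Set.Icc 0 tstar) :=
    fun i => (EuclideanSpace.proj (𝕜 := ℝ) i).continuous.comp_continuousOn hμc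
  have hg0 : ∀ (i : Fin 5), μ 0 i = 0 := fun i => by rw [hμ0]; rfl
  have hFi : ∀ (i : Fin 5), ∀ r ∈ Set.Icc (0:ℝ) tstar, |F r i| ≤ M :=
    fun i r hr => (apply_le_norm (F r) i).trans (hM r hr)
  have hcomp : ∀ r ∈ Set.Ioc (0:ℝ) tstar, ∀ i,
      μ' r i = (1/r) * (Lop d₁ d₂ (μ r) i) + F r i := by
    intro r hr i
    rw [hode r hr]
    simp [PiLp.add_apply, PiLp.smul_apply, smul_eq_mul]
  -- components 0, 3, 4
  have hb034 : ∀ (i : Fin 5), (i = 0 ∨ i = 3 ∨ i = 4) →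
      ∀ r ∈ Set.Icc (0:ℝ) tstar, |μ r i| ≤ M * r := by
    intro i hi r hr
    have := absA (C := M) (k := 0) (fun u => μ u i) (fun u => μ' u i)
      (hg0 i) (hgc i) (hgd i)
      (fun u hu => by
        show |μ' u i| ≤ M * u ^ 0
        rw [hcomp u hu i, Lop_zero d₁ d₂ _ i hi]
        simpa using hFi i u ⟨hu.1.le, hu.2⟩) r hr
    simpa using this
  -- component 1
  have hd₂0 : d₂ ≠ 0 := by omega
  obtain ⟨m, hm⟩ : ∃ m, d₂ = m + 1 := ⟨d₂ - 1, by omega⟩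
  have hb1' : ∀ r ∈ Set.Icc (0:ℝ) tstar,
      |r ^ d₂ * μ r 1| ≤ M / ((d₂:ℝ) + 1) * r ^ (d₂ + 1) := by
    apply absA (fun u => u ^ d₂ * μ u 1) (fun u => u ^ d₂ * F u 1)
    · simp [hg0 1, zero_pow hd₂0]
    · exact (continuous_pow d₂).continuousOn.mul (hgc 1)
    · intro r hr
      have h := ((hasDerivAt_pow d₂ r).hasDerivWithinAt).mul (hgd 1 r hr)
      refine h.congr_deriv ?_
      symm
      rw [hcomp r hr 1, Lop_one]
      have hr0 : r ≠ 0 := ne_of_gt hr.1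
      subst hm
      push_cast
      field_simp
      ring
    · intro r hr
      rw [abs_mul, abs_pow, abs_of_pos hr.1]
      have hf := hFi 1 r ⟨hr.1.le, hr.2⟩
      have h2 : (0:ℝ) ≤ r ^ d₂ := pow_nonneg hr.1.le d₂
      nlinarith [abs_nonneg (F r 1)]
  have hb1 : ∀ r ∈ Set.Icc (0:ℝ) tstar, |μ r 1| ≤ M / 3 * r := by
    intro r hr
    rcases eq_or_lt_of_le hr.1 with h | h
    · simp [← h, hg0 1]
    · have key := hb1' r hr
      rw [abs_mul, abs_pow, abs_of_pos h] at key
      have hpow : (0:ℝ) < r ^ d₂ := pow_pos h d₂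
      have key2 : r ^ d₂ * |μ r 1| ≤ r ^ d₂ * (M / ((d₂:ℝ) + 1) * r) := by
        calc r ^ d₂ * |μ r 1| ≤ M / ((d₂:ℝ) + 1) * r ^ (d₂ + 1) := key
          _ = r ^ d₂ * (M / ((d₂:ℝ) + 1) * r) := by rw [pow_succ]; ring
      have h3 : |μ r 1| ≤ M / ((d₂:ℝ) + 1) * r := (mul_le_mul_iff_right₀ hpow).1 key2
      refine h3.trans ?_
      have hd : (3:ℝ) ≤ (d₂:ℝ) + 1 := by
        have : (2:ℝ) ≤ (d₂:ℝ) := by exact_mod_cast hd₂2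
        linarith
      gcongr
  -- component 2
  have hb2' : ∀ r ∈ Set.Icc (0:ℝ) tstar,
      |r ^ 2 * μ r 2| ≤ (5/3*M) / ((2:ℝ) + 1) * r ^ (2 + 1) := by
    apply absA (C := 5/3*M) (k := 2) (fun u => u ^ 2 * μ u 2)
      (fun u => 2 * u * μ u 1 + u ^ 2 * F u 2)
    · simp [hg0 2]
    · exact (continuous_pow 2).continuousOn.mul (hgc 2)
    · intro r hr
      have h := ((hasDerivAt_pow 2 r).hasDerivWithinAt).mul (hgd 2 r hr)
      refine h.congr_deriv ?_
      symm
      rw [hcomp r hr 2, Lop_two]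
      have hr0 : r ≠ 0 := ne_of_gt hr.1
      push_cast
      field_simp
      ring
    · intro r hr
      have hb1r := hb1 r ⟨hr.1.le, hr.2⟩
      have hf := hFi 2 r ⟨hr.1.le, hr.2⟩
      have e1 : |2 * r * μ r 1| = 2 * r * |μ r 1| := by
        rw [abs_mul, abs_of_pos (by linarith [hr.1] : (0:ℝ) < 2 * r)]
      have e2 : |r ^ 2 * F r 2| = r ^ 2 * |F r 2| := by
        rw [abs_mul, abs_pow, abs_of_pos hr.1]
      have tri := abs_add_le (2 * r * μ r 1) (r ^ 2 * F r 2)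
      rw [e1, e2] at tri
      have h2 : (0:ℝ) ≤ r ^ 2 := sq_nonneg r
      nlinarith [abs_nonneg (F r 2), abs_nonneg (μ r 1), hr.1.le, sq_nonneg r]
  have hb2 : ∀ r ∈ Set.Icc (0:ℝ) tstar, |μ r 2| ≤ 5/9 * M * r := by
    intro r hr
    rcases eq_or_lt_of_le hr.1 with h | h
    · simp [← h, hg0 2]
    · have key := hb2' r hr
      rw [abs_mul, abs_pow, abs_of_pos h] at key
      have hpow : (0:ℝ) < r ^ 2 := pow_pos h 2
      have key2 : r ^ 2 * |μ r 2| ≤ r ^ 2 * (5/9 * M * r) := by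
        calc r ^ 2 * |μ r 2| ≤ (5/3*M) / ((2:ℝ) + 1) * r ^ (2 + 1) := key
          _ = r ^ 2 * (5/9 * M * r) := by rw [pow_succ]; ring
      exact (mul_le_mul_iff_right₀ hpow).1 key2
  -- norm bound on μ
  have hμt : ∀ r ∈ Set.Icc (0:ℝ) tstar, ‖μ r‖ ≤ 5 * M * r := by
    intro r hr
    have l1 := l2_le_l1 (μ r)
    have b0 := hb034 0 (Or.inl rfl) r hr
    have b3 := hb034 3 (Or.inr (Or.inl rfl)) r hr
    have b4 := hb034 4 (Or.inr (Or.inr rfl)) r hr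
    have b1 := hb1 r hr
    have b2 := hb2 r hr
    nlinarith [mul_nonneg hM0 hr.1]
  intro t ht s hs
  have hs' : s ∈ Set.Icc (0:ℝ) tstar := ⟨hs.1.le, hs.2⟩
  -- norm bound on Lop (μ s)
  have hLs : ‖Lop d₁ d₂ (μ s)‖ ≤ 5 * M * s := by
    have l1 := l2_le_l1 (Lop d₁ d₂ (μ s))
    rw [Lop_zero d₁ d₂ _ 0 (Or.inl rfl), Lop_zero d₁ d₂ _ 3 (Or.inr (Or.inl rfl)),
      Lop_zero d₁ d₂ _ 4 (Or.inr (Or.inr rfl)), Lop_one, Lop_two] at l1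
    simp only [abs_zero, add_zero, zero_add] at l1
    have b1 := hb1 s hs'
    have b2 := hb2 s hs'
    have e1 : |-(d₂:ℝ) * μ s 1| = (d₂:ℝ) * |μ s 1| := by
      rw [abs_mul, abs_neg, abs_of_nonneg (Nat.cast_nonneg d₂ : (0:ℝ) ≤ d₂)]
    have e2 : |2 * μ s 1 - 2 * μ s 2| ≤ 2 * |μ s 1| + 2 * |μ s 2| := by
      calc |2 * μ s 1 - 2 * μ s 2| ≤ |2 * μ s 1| + |2 * μ s 2| := abs_sub _ _
        _ = 2 * |μ s 1| + 2 * |μ s 2| := by rw [abs_mul, abs_mul]; norm_num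
    rw [e1] at l1
    have hd9 : (d₂:ℝ) ≤ 9 := by exact_mod_cast hd₂9
    nlinarith [abs_nonneg (μ s 1), abs_nonneg (μ s 2), mul_nonneg hM0 hs.1.le,
      mul_nonneg (by linarith : (0:ℝ) ≤ 9 - (d₂:ℝ)) (abs_nonneg (μ s 1))]
  have hμs : ‖μ' s‖ ≤ 6 * M := by
    rw [hode s hs]
    calc ‖(1/s) • Lop d₁ d₂ (μ s) + F s‖
        ≤ ‖(1/s) • Lop d₁ d₂ (μ s)‖ + ‖F s‖ := norm_add_le _ _
      _ = (1/s) * ‖Lop d₁ d₂ (μ s)‖ + ‖F s‖ := by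
          rw [norm_smul, Real.norm_eq_abs, abs_of_pos (one_div_pos.2 hs.1)]
      _ ≤ (1/s) * (5 * M * s) + M := by
          gcongr
          · exact le_of_lt (one_div_pos.2 hs.1)
          · exact hM s hs'
      _ = 5 * M + M := by
          have hs0 : s ≠ 0 := ne_of_gt hs.1
          field_simp
      _ = 6 * M := by ring
  have ht5 : ‖μ t‖ ≤ 5 * M * t := hμt t ht
  have htt : 5 * M * t ≤ 7.5 * M := by
    nlinarith [mul_nonneg hM0 (by linarith [ht.2, h1] : (0:ℝ) ≤ 1.5 - t)]
  linarith
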